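/- Let E be a finite index set of edges, let P and P' be disjoint nonempty finite subsets of E, and for each e ∈ E let a_e > 0, b_e > 0 be reals. Let w_i, w_max, W be reals with 1 ≤ w_i ≤ w_max and w_max ≤ W, and for each edge e let w_e be a real load satisfying w_i ≤ w_e ≤ W for e ∈ P and 0 ≤ w_e ≤ W for e ∈ P'. Set α = 2·log₂(1 + W + w_max). Define c' = Σ_{e∈P'} (a_e(w_e+w_i)+b_e)·w_i/(w_e+w_i) and c = Σ_{e∈P} (a_e w_e+b_e)·w_i/w_e. If α·c' ≤ c (the deviation from P to P' is α-improving), then Σ_{e∈P'} (a_e(w_e+w_i)+b_e)·log₂(1+w_e+w_i) + Σ_{e∈P} (a_e(w_e−w_i)+b_e)·log₂(1+w_e−w_i) < Σ_{e∈P'} (a_e w_e+b_e)·log₂(1+w_e) + Σ_{e∈P} (a_e w_e+b_e)·log₂(1+w_e); that is, every α-improving deviation strictly decreases the potential Φ(P) = Σ_{e∈E} c_e(w_e)·log₂(1+w_e). -/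

import Mathlib

open Finset

private lemma log_one_add_ge' {x : ℝ} (h0 : 0 ≤ x) (h1 : x ≤ 1) :
    x * Real.log 2 ≤ Real.log (1 + x) := by
  have hc := strictConcaveOn_log_Ioi.concaveOn.2 (Set.mem_Ioi.mpr one_pos)
    (Set.mem_Ioi.mpr two_pos) (by linarith : (0:ℝ) ≤ 1 - x) h0 (by ring)
  simp only [smul_eq_mul, Real.log_one] at hc
  have heq : (1 - x) * 1 + x * 2 = 1 + x := by ring
  rw [heq] at hc
  linarith

/-- Key inequality for edges of the new path. -/
private lemma aux1 (wi w M : ℝ) (hwi : 1 ≤ wi) (hw : 0 ≤ w)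
    (hle : 1 + w + wi ≤ M) (hM : 3 ≤ M) :
    (w + wi) * Real.logb 2 (1 + w + wi) - w * Real.logb 2 (1 + w)
      < 2 * wi * Real.logb 2 M := by
  have hlog2 : 0 < Real.log 2 := Real.log_pos one_lt_two
  have h1w : (0:ℝ) < 1 + w := by linarith
  have h1s : (0:ℝ) < 1 + w + wi := by linarith
  have hM0 : (0:ℝ) < M := by linarith
  have hlogM : 1 ≤ Real.log M := by
    rw [Real.le_log_iff_exp_le hM0]
    have h3 : Real.exp 1 ≤ 3 := by
      have := Real.exp_one_lt_d9
      linarith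
    linarith
  have hA : Real.log (1 + w + wi) ≤ Real.log M := Real.log_le_log h1s hle
  have hAB : Real.log (1 + w + wi) - Real.log (1 + w) ≤ wi / (1 + w) := by
    have h := Real.log_le_sub_one_of_pos (x := (1 + w + wi) / (1 + w)) (by positivity)
    rw [Real.log_div (by linarith) (by linarith)] at h
    have heq : (1 + w + wi) / (1 + w) - 1 = wi / (1 + w) := by field_simp; ring
    linarith
  have hfrac : w * (wi / (1 + w)) < wi * Real.log M := by
    have ht : w / (1 + w) < 1 := (div_lt_one h1w).mpr (by linarith)
    have heq : w * (wi / (1 + w)) = wi * (w / (1 + w)) := by ring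
    rw [heq]
    have hwi0 : (0:ℝ) < wi := by linarith
    exact mul_lt_mul_of_pos_left (lt_of_lt_of_le ht hlogM) hwi0
  have hgoal' : (w + wi) * Real.log (1 + w + wi) - w * Real.log (1 + w)
      < 2 * wi * Real.log M := by
    have h4 := mul_le_mul_of_nonneg_left hAB hw
    have h5 := mul_le_mul_of_nonneg_left hA (by linarith : (0:ℝ) ≤ wi)
    nlinarith [h4, h5, hfrac]
  simp only [Real.logb]
  rw [show (w + wi) * (Real.log (1 + w + wi) / Real.log 2)
        - w * (Real.log (1 + w) / Real.log 2)
      = ((w + wi) * Real.log (1 + w + wi) - w * Real.log (1 + w)) / Real.log 2 from by ring,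
    show 2 * wi * (Real.log M / Real.log 2) = (2 * wi * Real.log M) / Real.log 2 from by ring]
  exact div_lt_div_of_pos_right hgoal' hlog2

/-- Key inequality for edges of the old path. -/
private lemma aux2 (wi w : ℝ) (hwi : 1 ≤ wi) (hw : wi ≤ w) :
    wi / w ≤ Real.logb 2 (1 + w) - Real.logb 2 (1 + w - wi) := by
  have hlog2 : 0 < Real.log 2 := Real.log_pos one_lt_two
  have hw0 : (0:ℝ) < w := by linarith
  have hu : (1:ℝ) ≤ 1 + w - wi := by linarith
  have hu0 : (0:ℝ) < 1 + w - wi := by linarith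
  have key : wi / w * Real.log 2 ≤ Real.log (1 + w) - Real.log (1 + w - wi) := by
    have hratio : Real.log (1 + w) - Real.log (1 + w - wi)
        = Real.log ((1 + w) / (1 + w - wi)) :=
      (Real.log_div (by linarith) (by linarith)).symm
    rw [hratio]
    rcases le_or_gt wi (1 + w - wi) with hcase | hcase
    · -- wi ≤ u : concavity
      have hx0 : 0 ≤ wi / (1 + w - wi) := by positivity
      have hx1 : wi / (1 + w - wi) ≤ 1 := (div_le_one hu0).mpr hcase
      have h := log_one_add_ge' hx0 hx1
      have heq : (1:ℝ) + wi / (1 + w - wi) = (1 + w) / (1 + w - wi) := by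
        field_simp; ring
      rw [heq] at h
      have hfr : wi / w ≤ wi / (1 + w - wi) := by
        apply div_le_div_of_nonneg_left (by linarith) hu0 (by linarith)
      nlinarith [h, hfr, hlog2]
    · -- u < wi
      have h2 : (2:ℝ) ≤ (1 + w) / (1 + w - wi) := by
        rw [le_div_iff₀ hu0]; linarith
      have hlog : Real.log 2 ≤ Real.log ((1 + w) / (1 + w - wi)) :=
        Real.log_le_log (by norm_num) h2
      have hwiw : wi / w ≤ 1 := (div_le_one hw0).mpr hw
      nlinarith [hlog, hwiw, hlog2]
  simp only [Real.logb]
  rw [div_sub_div_same, le_div_iff₀ hlog2]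
  exact key

/-- Per-edge bound on the new path. -/
private lemma edgeP' (a b wi w W wmax : ℝ) (ha : 0 < a) (hb : 0 < b)
    (hwi : 1 ≤ wi) (hw : 0 ≤ w) (hWw : w ≤ W) (hmax : wi ≤ wmax) (hmW : wmax ≤ W) :
    (a * (w + wi) + b) * Real.logb 2 (1 + w + wi) - (a * w + b) * Real.logb 2 (1 + w)
      < (2 * Real.logb 2 (1 + W + wmax)) * ((a * (w + wi) + b) * wi / (w + wi)) := by
  have hs : (0:ℝ) < w + wi := by linarith
  have hC : (0:ℝ) < a * (w + wi) + b := by nlinarith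
  have hB : 0 ≤ Real.logb 2 (1 + w) := Real.logb_nonneg one_lt_two (by linarith)
  have hold : (a * (w + wi) + b) * w / (w + wi) ≤ a * w + b := by
    rw [div_le_iff₀ hs]; nlinarith
  have h2 : (a * (w + wi) + b) * w / (w + wi) * Real.logb 2 (1 + w)
      ≤ (a * w + b) * Real.logb 2 (1 + w) := mul_le_mul_of_nonneg_right hold hB
  have key := aux1 wi w (1 + W + wmax) hwi hw (by linarith) (by linarith)
  have hCs : (0:ℝ) < (a * (w + wi) + b) / (w + wi) := by positivity
  have h3 := mul_lt_mul_of_pos_left key hCs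
  have e1 : (a * (w + wi) + b) / (w + wi)
        * ((w + wi) * Real.logb 2 (1 + w + wi) - w * Real.logb 2 (1 + w))
      = (a * (w + wi) + b) * Real.logb 2 (1 + w + wi)
        - (a * (w + wi) + b) * w / (w + wi) * Real.logb 2 (1 + w) := by
    field_simp
  have e2 : (a * (w + wi) + b) / (w + wi) * (2 * wi * Real.logb 2 (1 + W + wmax))
      = (2 * Real.logb 2 (1 + W + wmax)) * ((a * (w + wi) + b) * wi / (w + wi)) := by
    ring
  rw [e1, e2] at h3
  linarith

/-- Per-edge bound on the old path. -/
private lemma edgeP (a b wi w : ℝ) (ha : 0 < a) (hb : 0 < b)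
    (hwi : 1 ≤ wi) (hw : wi ≤ w) :
    (a * (w - wi) + b) * Real.logb 2 (1 + w - wi) - (a * w + b) * Real.logb 2 (1 + w)
      ≤ -((a * w + b) * wi / w) := by
  have hw0 : (0:ℝ) < w := by linarith
  have hC : (0:ℝ) < a * w + b := by nlinarith
  have hD : a * (w - wi) + b ≤ a * w + b := by nlinarith
  have hL' : 0 ≤ Real.logb 2 (1 + w - wi) := Real.logb_nonneg one_lt_two (by linarith)
  have h1 : (a * (w - wi) + b) * Real.logb 2 (1 + w - wi)
      ≤ (a * w + b) * Real.logb 2 (1 + w - wi) := mul_le_mul_of_nonneg_right hD hL'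
  have key := aux2 wi w hwi hw
  have h2 : (a * w + b) * (wi / w)
      ≤ (a * w + b) * (Real.logb 2 (1 + w) - Real.logb 2 (1 + w - wi)) :=
    mul_le_mul_of_nonneg_left key hC.le
  have e : (a * w + b) * wi / w = (a * w + b) * (wi / w) := by ring
  rw [e]
  nlinarith [h1, h2]

/-- Every `α`-improving deviation strictly decreases the potential
`Φ(P) = Σ_e c_e(w_e)·log₂(1+w_e)` in the weighted Shapley network design game with
affine linear edge costs `c_e(w) = a_e·w + b_e` and `α = 2·log₂(1 + W + w_max)`. -/
theorem potential_strict_decrease {E : Type*} [Fintype E] (P P' : Finset E)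
    (hdisj : Disjoint P P') (hP : P.Nonempty) (hP' : P'.Nonempty)
    (a b : E → ℝ) (ha : ∀ e, 0 < a e) (hb : ∀ e, 0 < b e)
    (wi wmax W : ℝ) (hwi : 1 ≤ wi) (hwimax : wi ≤ wmax) (hmaxW : wmax ≤ W)
    (w : E → ℝ)
    (hwP : ∀ e ∈ P, wi ≤ w e ∧ w e ≤ W)
    (hwP' : ∀ e ∈ P', 0 ≤ w e ∧ w e ≤ W)
    (α : ℝ) (hα : α = 2 * Real.logb 2 (1 + W + wmax))
    (c' c : ℝ)
    (hc' : c' = ∑ e ∈ P', (a e * (w e + wi) + b e) * wi / (w e + wi))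
    (hc : c = ∑ e ∈ P, (a e * w e + b e) * wi / w e)
    (himp : α * c' ≤ c) :
    (∑ e ∈ P', (a e * (w e + wi) + b e) * Real.logb 2 (1 + w e + wi))
      + (∑ e ∈ P, (a e * (w e - wi) + b e) * Real.logb 2 (1 + w e - wi))
    < (∑ e ∈ P', (a e * w e + b e) * Real.logb 2 (1 + w e))
      + (∑ e ∈ P, (a e * w e + b e) * Real.logb 2 (1 + w e)) := by
  subst hα hc' hc
  have hstep1 :
      ∑ e ∈ P', ((a e * (w e + wi) + b e) * Real.logb 2 (1 + w e + wi)
          - (a e * w e + b e) * Real.logb 2 (1 + w e))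
        < ∑ e ∈ P', (2 * Real.logb 2 (1 + W + wmax))
            * ((a e * (w e + wi) + b e) * wi / (w e + wi)) := by
    apply Finset.sum_lt_sum_of_nonempty hP'
    intro e he
    exact edgeP' (a e) (b e) wi (w e) W wmax (ha e) (hb e) hwi
      (hwP' e he).1 (hwP' e he).2 hwimax hmaxW
  have hstep2 :
      ∑ e ∈ P, ((a e * (w e - wi) + b e) * Real.logb 2 (1 + w e - wi)
          - (a e * w e + b e) * Real.logb 2 (1 + w e))
        ≤ ∑ e ∈ P, -((a e * w e + b e) * wi / w e) := by
    apply Finset.sum_le_sum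
    intro e he
    exact edgeP (a e) (b e) wi (w e) (ha e) (hb e) hwi (hwP e he).1
  rw [Finset.sum_sub_distrib, ← Finset.mul_sum] at hstep1
  rw [Finset.sum_sub_distrib, Finset.sum_neg_distrib] at hstep2
  linarith
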